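/- Suppose S ⊂ ℝⁿ is both the convex hull of the finite set {v₁,…,v_μ} and the polyhedron {s ∈ ℝⁿ : g_h·s ≤ ξ_h for h = 1,…,H} with all ξ_h > 0. Let Q = conv{w₁,…,w_ν} ⊂ ℝ^p and D = conv{r₁,…,r_η} ⊂ ℝ^l. Assume that for every i ∈ {1,…,μ}, j ∈ {1,…,ν}, k ∈ {1,…,η}, and every index h with g_h·vᵢ = ξ_h, one has g_h·(F(w_j)·vᵢ + E(w_j)·r_k) ≤ 0. Then for every s ∈ S, every q ∈ Q, every δ ∈ D, and every index h with g_h·s = ξ_h, one has g_h·(F(q)·s + E(q)·δ) ≤ 0. -/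

import Mathlib

open Set Matrix

/-- The affine matrix function `F(q) = F₀ + ∑ l, q_l F_l`. -/
noncomputable def matF {n p : ℕ} (F0 : Matrix (Fin n) (Fin n) ℝ)
    (F : Fin p → Matrix (Fin n) (Fin n) ℝ) (q : Fin p → ℝ) : Matrix (Fin n) (Fin n) ℝ :=
  F0 + ∑ l, q l • F l

/-- The affine matrix function `E(q) = E₀ + ∑ l, q_l E_l`. -/
noncomputable def matE {n l p : ℕ} (E0 : Matrix (Fin n) (Fin l) ℝ)
    (E : Fin p → Matrix (Fin n) (Fin l) ℝ) (q : Fin p → ℝ) : Matrix (Fin n) (Fin l) ℝ :=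
  E0 + ∑ i, q i • E i

/-- Any element of the convex hull of a finite family is a convex combination. -/
lemma hull_rep {m N : ℕ} (v : Fin N → Fin m → ℝ) (x : Fin m → ℝ)
    (hx : x ∈ convexHull ℝ (Set.range v)) :
    ∃ a : Fin N → ℝ, (∀ i, 0 ≤ a i) ∧ ∑ i, a i = 1 ∧ x = ∑ i, a i • v i := by
  rw [convexHull_range_eq_exists_affineCombination] at hx
  obtain ⟨s, w, hw0, hw1, hx⟩ := hx
  refine ⟨fun i => if i ∈ s then w i else 0,
    fun i => by dsimp only; split <;> [exact hw0 i ‹_›; rfl], ?_, ?_⟩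
  · rw [Finset.sum_ite_mem, Finset.univ_inter, hw1]
  · rw [← hx, Finset.affineCombination_eq_linear_combination s v w hw1]
    rw [← Finset.sum_subset (Finset.subset_univ s)]
    · exact Finset.sum_congr rfl fun i hi => by simp [hi]
    · intro i _ hi; simp [hi]

lemma dot_mulVec_sumvec {m k N : ℕ} (g : Fin m → ℝ) (M : Matrix (Fin m) (Fin k) ℝ)
    (a : Fin N → ℝ) (x : Fin N → Fin k → ℝ) :
    g ⬝ᵥ (M *ᵥ ∑ i, a i • x i) = ∑ i, a i * (g ⬝ᵥ (M *ᵥ x i)) := by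
  let φ : (Fin k → ℝ) →ₗ[ℝ] ℝ :=
    { toFun := fun y => g ⬝ᵥ (M *ᵥ y)
      map_add' := fun y z => by rw [Matrix.mulVec_add, dotProduct_add]
      map_smul' := fun c y => by rw [Matrix.mulVec_smul, dotProduct_smul]; rfl }
  calc g ⬝ᵥ (M *ᵥ ∑ i, a i • x i) = φ (∑ i, a i • x i) := rfl
    _ = ∑ i, φ (a i • x i) := map_sum φ _ _
    _ = ∑ i, a i * (g ⬝ᵥ (M *ᵥ x i)) := Finset.sum_congr rfl fun i _ => by
          rw [_root_.map_smul]; rfl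

lemma dot_summat_mulVec {m k N : ℕ} (g : Fin m → ℝ) (M : Fin N → Matrix (Fin m) (Fin k) ℝ)
    (b : Fin N → ℝ) (s : Fin k → ℝ) :
    g ⬝ᵥ ((∑ j, b j • M j) *ᵥ s) = ∑ j, b j * (g ⬝ᵥ (M j *ᵥ s)) := by
  let φ : Matrix (Fin m) (Fin k) ℝ →ₗ[ℝ] ℝ :=
    { toFun := fun A => g ⬝ᵥ (A *ᵥ s)
      map_add' := fun A B => by rw [Matrix.add_mulVec, dotProduct_add]
      map_smul' := fun c A => by rw [Matrix.smul_mulVec, dotProduct_smul]; rfl }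
  calc g ⬝ᵥ ((∑ j, b j • M j) *ᵥ s) = φ (∑ j, b j • M j) := rfl
    _ = ∑ j, φ (b j • M j) := map_sum φ _ _
    _ = ∑ j, b j * (g ⬝ᵥ (M j *ᵥ s)) := Finset.sum_congr rfl fun j _ => by
          rw [_root_.map_smul]; rfl

lemma affine_comb {α : Type*} [AddCommGroup α] [Module ℝ α] {p N : ℕ}
    (A0 : α) (A : Fin p → α) (b : Fin N → ℝ) (w : Fin N → Fin p → ℝ)
    (hb : ∑ j, b j = 1) :
    A0 + ∑ i, (∑ j, b j • w j) i • A i = ∑ j, b j • (A0 + ∑ i, w j i • A i) := by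
  simp only [smul_add, Finset.sum_add_distrib, ← Finset.sum_smul, hb, one_smul,
    Finset.smul_sum, smul_smul]
  congr 1
  rw [Finset.sum_comm]
  refine Finset.sum_congr rfl fun i _ => ?_
  rw [← Finset.sum_smul]
  congr 1
  simp [Finset.sum_apply]

theorem subtangentiality_from_vertices {n l p μ ν η H : ℕ}
    (F0 : Matrix (Fin n) (Fin n) ℝ) (F : Fin p → Matrix (Fin n) (Fin n) ℝ)
    (E0 : Matrix (Fin n) (Fin l) ℝ) (E : Fin p → Matrix (Fin n) (Fin l) ℝ)
    (v : Fin μ → Fin n → ℝ) (w : Fin ν → Fin p → ℝ) (r : Fin η → Fin l → ℝ)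
    (g : Fin H → Fin n → ℝ) (ξ : Fin H → ℝ) (hξ : ∀ h, 0 < ξ h)
    (S : Set (Fin n → ℝ))
    (hS : S = convexHull ℝ (Set.range v))
    (hS' : S = {s : Fin n → ℝ | ∀ h, g h ⬝ᵥ s ≤ ξ h})
    (hyp : ∀ (i : Fin μ) (j : Fin ν) (k : Fin η) (h : Fin H), g h ⬝ᵥ v i = ξ h →
      g h ⬝ᵥ ((matF F0 F (w j)).mulVec (v i) + (matE E0 E (w j)).mulVec (r k)) ≤ 0) :
    ∀ s ∈ S, ∀ q ∈ convexHull ℝ (Set.range w), ∀ δ ∈ convexHull ℝ (Set.range r),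
      ∀ h : Fin H, g h ⬝ᵥ s = ξ h →
        g h ⬝ᵥ ((matF F0 F q).mulVec s + (matE E0 E q).mulVec δ) ≤ 0 := by
  intro s hs q hq δ hδ h hsh
  obtain ⟨a, ha0, ha1, hsa⟩ := hull_rep v s (hS ▸ hs)
  obtain ⟨b, hb0, hb1, hqb⟩ := hull_rep w q hq
  obtain ⟨c, hc0, hc1, hδc⟩ := hull_rep r δ hδ
  -- every vertex satisfies the constraint
  have hvS : ∀ i, g h ⬝ᵥ v i ≤ ξ h := fun i => by
    have hvi : v i ∈ S := hS ▸ subset_convexHull ℝ _ (Set.mem_range_self i)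
    rw [hS'] at hvi
    exact hvi h
  -- vertices with positive weight are on the active facet
  have key : ∀ i, a i ≠ 0 → g h ⬝ᵥ v i = ξ h := by
    have hgs : g h ⬝ᵥ s = ∑ i, a i * (g h ⬝ᵥ v i) := by
      have := dot_mulVec_sumvec (g h) (1 : Matrix (Fin n) (Fin n) ℝ) a v
      simpa [Matrix.one_mulVec, hsa] using this
    have hsum : ∑ i, a i * (ξ h - g h ⬝ᵥ v i) = 0 := by
      simp only [mul_sub, Finset.sum_sub_distrib, ← Finset.sum_mul, ha1, one_mul]
      rw [← hgs, hsh]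
      ring
    intro i hi
    have hz := (Finset.sum_eq_zero_iff_of_nonneg
      (fun i _ => mul_nonneg (ha0 i) (sub_nonneg.2 (hvS i)))).1 hsum i (Finset.mem_univ i)
    rcases mul_eq_zero.1 hz with h1 | h2
    · exact absurd h1 hi
    · linarith [sub_eq_zero.1 h2]
  -- affine decompositions of the matrices
  have hF : matF F0 F q = ∑ j, b j • matF F0 F (w j) := by
    rw [hqb]; exact affine_comb F0 F b w hb1
  have hE : matE E0 E q = ∑ j, b j • matE E0 E (w j) := by
    rw [hqb]; exact affine_comb E0 E b w hb1
  -- expand the whole expression as a triple convex combination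
  have expand : g h ⬝ᵥ ((matF F0 F q) *ᵥ s + (matE E0 E q) *ᵥ δ)
      = ∑ j, b j * (∑ i, ∑ k, a i * c k *
          (g h ⬝ᵥ ((matF F0 F (w j)) *ᵥ v i + (matE E0 E (w j)) *ᵥ r k))) := by
    rw [dotProduct_add, hF, hE, dot_summat_mulVec, dot_summat_mulVec,
      ← Finset.sum_add_distrib]
    refine Finset.sum_congr rfl fun j _ => ?_
    rw [← mul_add]
    congr 1
    rw [hsa, hδc, dot_mulVec_sumvec, dot_mulVec_sumvec]
    have e1 : ∀ i k, a i * c k * (g h ⬝ᵥ ((matF F0 F (w j)) *ᵥ v i + (matE E0 E (w j)) *ᵥ r k))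
        = a i * c k * (g h ⬝ᵥ ((matF F0 F (w j)) *ᵥ v i))
          + a i * c k * (g h ⬝ᵥ ((matE E0 E (w j)) *ᵥ r k)) := fun i k => by
      rw [dotProduct_add]; ring
    simp only [e1, Finset.sum_add_distrib]
    congr 1
    · refine (Finset.sum_congr rfl fun i _ => ?_)
      calc a i * (g h ⬝ᵥ ((matF F0 F (w j)) *ᵥ v i))
          = (∑ k, c k) * (a i * (g h ⬝ᵥ ((matF F0 F (w j)) *ᵥ v i))) := by rw [hc1, one_mul]
        _ = ∑ k, a i * c k * (g h ⬝ᵥ ((matF F0 F (w j)) *ᵥ v i)) := by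
            rw [Finset.sum_mul]; exact Finset.sum_congr rfl fun k _ => by ring
    · calc ∑ k, c k * (g h ⬝ᵥ ((matE E0 E (w j)) *ᵥ r k))
          = (∑ i, a i) * ∑ k, c k * (g h ⬝ᵥ ((matE E0 E (w j)) *ᵥ r k)) := by rw [ha1, one_mul]
        _ = ∑ i, ∑ k, a i * c k * (g h ⬝ᵥ ((matE E0 E (w j)) *ᵥ r k)) := by
            rw [Finset.sum_mul]
            refine Finset.sum_congr rfl fun i _ => ?_
            rw [Finset.mul_sum]
            exact Finset.sum_congr rfl fun k _ => by ring
  rw [expand]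
  refine Finset.sum_nonpos fun j _ => mul_nonpos_of_nonneg_of_nonpos (hb0 j) ?_
  refine Finset.sum_nonpos fun i _ => Finset.sum_nonpos fun k _ => ?_
  by_cases hai : a i = 0
  · simp [hai]
  · exact mul_nonpos_of_nonneg_of_nonpos (mul_nonneg (ha0 i) (hc0 k))
      (hyp i j k h (key i hai))
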